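/- Every countable scattered linear order belongs to VD, i.e., the class of countable scattered linear orders is the smallest class of countable linear orders containing 0 and 1 and closed under ordered sums indexed by finite linear orders, ω, ω*, and ζ = ω* + ω. -/

import Mathlib

/-- The (sub)order `I ⊆ ℚ` has order type `ω`, `ω*`, `ζ` (the integers), or is finite. -/
def GoodIndex (I : Set ℚ) : Prop :=
  Nonempty (I ≃o ℕ) ∨ Nonempty (I ≃o ℕᵒᵈ) ∨ Nonempty (I ≃o ℤ) ∨ I.Finite

/-- `VD α S` : the countable linear order `S ⊆ ℚ` lies in the class `VD_α`
of very discrete linear orders: `VD_0` consists of the empty and one-point orders,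
and `S ∈ VD_α` if `S` is an ordered sum, indexed by an order of type `ω`, `ω*`, `ζ`
or a finite order, of orders lying in `⋃_{β<α} VD_β`. -/
inductive VD : Ordinal.{0} → Set ℚ → Prop
  | empty : VD 0 ∅
  | single (q : ℚ) : VD 0 {q}
  | sum (α : Ordinal.{0}) (I : Set ℚ) (hI : GoodIndex I)
      (L : ℚ → Set ℚ) (β : ℚ → Ordinal.{0})
      (hβ : ∀ i ∈ I, β i < α) (h : ∀ i ∈ I, VD (β i) (L i))
      (S : Set ℚ)
      (hiso : Nonempty (S ≃o (Σₗ i : I, L i.val))) : VD α S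

/-- An abstract countable linear order is "VD-representable". -/
def VDT (X : Type) [LinearOrder X] : Prop :=
  ∃ (α : Ordinal.{0}) (S : Set ℚ), Nonempty (X ≃o ↥S) ∧ VD α S

lemma VDT_iso {X Y : Type} [LinearOrder X] [LinearOrder Y] (e : X ≃o Y) (h : VDT X) : VDT Y := by
  obtain ⟨α, S, ⟨f⟩, hvd⟩ := h
  exact ⟨α, S, ⟨e.symm.trans f⟩, hvd⟩

lemma VDT_subsingleton (X : Type) [LinearOrder X] [Subsingleton X] : VDT X := by
  rcases isEmpty_or_nonempty X with hX | hX
  · refine ⟨0, ∅, ⟨⟨Equiv.equivOfIsEmpty X _, ?_⟩⟩, VD.empty⟩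
    intro a; exact isEmptyElim a
  · have : Unique X := uniqueOfSubsingleton (Classical.arbitrary X)
    refine ⟨0, {0}, ⟨⟨Equiv.ofUnique X _, ?_⟩⟩, VD.single 0⟩
    intro a b
    simp [Subsingleton.elim a b]

/-- Abstract version of GoodIndex. -/
def GoodOrder (ι : Type) [LinearOrder ι] : Prop :=
  Nonempty (ι ≃o ℕ) ∨ Nonempty (ι ≃o ℕᵒᵈ) ∨ Nonempty (ι ≃o ℤ) ∨ Finite ι

lemma GoodOrder.countable {ι : Type} [LinearOrder ι] (h : GoodOrder ι) : Countable ι := by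
  unfold GoodOrder at h
  rcases h with h | h | h | h
  · obtain ⟨e⟩ := h; exact Countable.of_equiv ℕ e.symm.toEquiv
  · obtain ⟨e⟩ := h; exact Countable.of_equiv ℕᵒᵈ e.symm.toEquiv
  · obtain ⟨e⟩ := h; exact Countable.of_equiv ℤ e.symm.toEquiv
  · exact Finite.to_countable

lemma exists_good_set (ι : Type) [LinearOrder ι] (h : GoodOrder ι) :
    ∃ I : Set ℚ, GoodIndex I ∧ Nonempty (ι ≃o ↥I) := by
  have : Countable ι := h.countable
  obtain ⟨j⟩ := Order.embedding_from_countable_to_dense ι ℚ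
  have e : ι ≃o ↥(Set.range j) := j.strictMono.orderIso j
  refine ⟨Set.range j, ?_, ⟨e⟩⟩
  unfold GoodOrder at h
  rcases h with h | h | h | h
  · obtain ⟨f⟩ := h; exact Or.inl ⟨e.symm.trans f⟩
  · obtain ⟨f⟩ := h; exact Or.inr (Or.inl ⟨e.symm.trans f⟩)
  · obtain ⟨f⟩ := h; exact Or.inr (Or.inr (Or.inl ⟨e.symm.trans f⟩))
  · exact Or.inr (Or.inr (Or.inr (Set.finite_range j)))
section helpers
variable {X : Type} [Preorder X]

/-- Order iso between subtypes over pointwise-equivalent predicates. -/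
def setIso {P Q : X → Prop} (h : ∀ x, P x ↔ Q x) : {x // P x} ≃o {x // Q x} :=
  ⟨Equiv.subtypeEquiv (Equiv.refl X) (by simpa using h), Iff.rfl⟩

/-- Order iso flattening a subtype of a subtype. -/
def subsubIso (T : Set X) (P : X → Prop) :
    {t : ↥T // P ↑t} ≃o ↥{x | x ∈ T ∧ P x} where
  toFun a := ⟨a.1.1, a.1.2, a.2⟩
  invFun b := ⟨⟨b.1, b.2.1⟩, b.2.2⟩
  left_inv _ := rfl
  right_inv _ := rfl
  map_rel_iff' := Iff.rfl

end helpers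

/-- A monotone map to `ι` realizes a linear order as a lex-sum of its fibers. -/
noncomputable def monoSigmaIso {X ι : Type} [LinearOrder X] [LinearOrder ι]
    (f : X → ι) (hf : Monotone f) : X ≃o Σₗ i, {x : X // f x = i} where
  toFun x := toLex ⟨f x, x, rfl⟩
  invFun p := (ofLex p).2.1
  left_inv x := rfl
  right_inv p := by
    rcases p with ⟨i, x, h⟩
    subst h
    rfl
  map_rel_iff' := by
    intro a b
    show (toLex ⟨f a, ⟨a, rfl⟩⟩ : Σₗ i, {x : X // f x = i}) ≤ toLex ⟨f b, ⟨b, rfl⟩⟩ ↔ a ≤ b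
    rw [Sigma.Lex.le_def]
    have key : ∀ {i j : ι} (h : i = j) (x : {y : X // f y = i}),
        ((h.rec x : {y : X // f y = j}) : X) = x := by
      rintro i j rfl x; rfl
    constructor
    · rintro (hlt | ⟨h, hle⟩)
      · exact le_of_not_ge fun hba => absurd (hf hba) (not_le_of_gt hlt)
      · rw [← Subtype.coe_le_coe, key h] at hle
        exact hle
    · intro hab
      rcases lt_or_eq_of_le (hf hab) with h | h
      · exact Or.inl h
      · refine Or.inr ⟨h, ?_⟩
        rw [← Subtype.coe_le_coe]
        exact le_of_eq_of_le (key h _) hab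

/-- Congruence of lexicographic sigma orders. -/
def sigmaLexCongr {ι κ : Type} [LinearOrder ι] [LinearOrder κ]
    {F : ι → Type} {G : κ → Type} [∀ i, LinearOrder (F i)] [∀ k, LinearOrder (G k)]
    (e : ι ≃o κ) (w : ∀ i, F i ≃o G (e i)) : (Σₗ i, F i) ≃o (Σₗ k, G k) where
  toEquiv := (ofLex (α := Σ i, F i)).trans
    ((Equiv.sigmaCongr e.toEquiv fun i => (w i).toEquiv).trans (toLex (α := Σ k, G k)))
  map_rel_iff' := by
    rintro ⟨i, x⟩ ⟨j, y⟩
    show (toLex ⟨e i, w i x⟩ : Σₗ k, G k) ≤ toLex ⟨e j, w j y⟩ ↔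
      (toLex ⟨i, x⟩ : Σₗ i, F i) ≤ toLex ⟨j, y⟩
    rw [Sigma.Lex.le_def, Sigma.Lex.le_def]
    constructor
    · rintro (hlt | ⟨h, hle⟩)
      · exact Or.inl (e.lt_iff_lt.1 hlt)
      · have hij : i = j := e.injective h
        subst hij
        exact Or.inr ⟨rfl, (w i).le_iff_le.1 hle⟩
    · rintro (hlt | ⟨h, hle⟩)
      · exact Or.inl (e.lt_iff_lt.2 hlt)
      · have hij : i = j := h
        subst hij
        exact Or.inr ⟨rfl, (w i).le_iff_le.2 hle⟩

lemma VDT_of_mono {X ι : Type} [LinearOrder X] [Countable X] [LinearOrder ι]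
    (hι : GoodOrder ι) (f : X → ι) (hf : Monotone f)
    (hfib : ∀ i, VDT {x : X // f x = i}) : VDT X := by
  obtain ⟨I, hGood, ⟨e⟩⟩ := exists_good_set ι hι
  -- choose data for each fiber
  choose α' S' hiso' hvd' using hfib
  classical
  set L : ℚ → Set ℚ := fun q => if h : q ∈ I then S' (e.symm ⟨q, h⟩) else ∅ with hL
  set β : ℚ → Ordinal.{0} := fun q => if h : q ∈ I then α' (e.symm ⟨q, h⟩) else 0 with hβdef
  have hsmall : BddAbove (Set.range α') := Ordinal.bddAbove_range α'
  set αtop : Ordinal.{0} := Order.succ (⨆ i, α' i) with hα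
  have hβlt : ∀ q ∈ I, β q < αtop := by
    intro q hq
    rw [hβdef]
    simp only [dif_pos hq]
    exact (le_ciSup hsmall _).trans_lt (Order.lt_succ _)
  have hvdL : ∀ q ∈ I, VD (β q) (L q) := by
    intro q hq
    rw [hβdef, hL]
    simp only [dif_pos hq]
    exact hvd' _
  obtain ⟨j⟩ := Order.embedding_from_countable_to_dense X ℚ
  have eX : X ≃o ↥(Set.range j) := j.strictMono.orderIso j
  -- fiberwise isos
  have wfib : ∀ i : ι, {x : X // f x = i} ≃o ↥(L ↑(e i)) := by
    intro i
    have h1 : (e i : ℚ) ∈ I := (e i).2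
    have h2 : L ↑(e i) = S' i := by
      rw [hL]; simp only [dif_pos h1]
      rw [show (⟨↑(e i), h1⟩ : ↥I) = e i from Subtype.ext rfl, e.symm_apply_apply]
    exact (Classical.choice (hiso' i)).trans (OrderIso.setCongr _ _ h2.symm)
  have bigIso : ↥(Set.range j) ≃o Σₗ q : ↥I, ↥(L ↑q) :=
    (eX.symm.trans (monoSigmaIso f hf)).trans (sigmaLexCongr e wfib)
  exact ⟨αtop, Set.range j, ⟨eX⟩, VD.sum αtop I hGood L β hβlt hvdL _ ⟨bigIso⟩⟩

section scattered
open Set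
variable {L : Type} [LinearOrder L] [Countable L]

/-- Hereditarily VD set. -/
def HVD (A : Set L) : Prop := ∀ T : Set L, T ⊆ A → VDT ↥T

omit [Countable L] in
lemma HVD.mono {A B : Set L} (h : HVD B) (hAB : A ⊆ B) : HVD A :=
  fun T hT => h T (hT.trans hAB)

/-- Splitting lemma: a set that is a union of a "low" VD part and a "high" VD part is VD. -/
lemma VDT_split (T T₁ T₂ : Set L) (hT : T = T₁ ∪ T₂)
    (hlt : ∀ a ∈ T₁, ∀ b ∈ T₂, a < b)
    (h1 : VDT ↥T₁) (h2 : VDT ↥T₂) : VDT ↥T := by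
  classical
  have hdisj : ∀ z, z ∈ T₁ → z ∈ T₂ → False := fun z h1' h2' => lt_irrefl z (hlt z h1' z h2')
  have hGoodBool : GoodOrder Bool := Or.inr (Or.inr (Or.inr (by infer_instance)))
  apply VDT_of_mono hGoodBool (fun t : ↥T => if (t : L) ∈ T₂ then true else false)
  · intro s t hst
    by_cases hs : (s : L) ∈ T₂
    · have ht : (t : L) ∈ T₂ := by
        rcases (hT ▸ t.2 : (t : L) ∈ T₁ ∪ T₂) with h | h
        · exact absurd (hlt _ h _ hs) (not_lt_of_ge hst)
        · exact h
      simp [hs, ht]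
    · simp only [if_neg hs]
      exact Bool.false_le _
  · intro b
    cases b
    · have hset : {x | x ∈ T ∧ (if x ∈ T₂ then true else false) = false} = T₁ := by
        ext z
        simp only [mem_setOf_eq, ite_eq_right_iff]
        constructor
        · rintro ⟨hzT, hz2⟩
          rcases (hT ▸ hzT : z ∈ T₁ ∪ T₂) with h | h
          · exact h
          · exact absurd (hz2 h) (by simp)
        · intro h
          exact ⟨hT ▸ Or.inl h, fun h2 => absurd (hdisj z h h2) not_false⟩
      exact VDT_iso ((subsubIso T _).trans (OrderIso.setCongr _ _ hset)).symm h1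
    · have hset : {x | x ∈ T ∧ (if x ∈ T₂ then true else false) = true} = T₂ := by
        ext z
        simp only [mem_setOf_eq, ite_eq_left_iff]
        constructor
        · rintro ⟨hzT, hz2⟩
          by_contra h
          exact absurd (hz2 h) (by simp)
        · intro h
          exact ⟨hT ▸ Or.inr h, fun h2 => absurd h h2⟩
      exact VDT_iso ((subsubIso T _).trans (OrderIso.setCongr _ _ hset)).symm h2

/-- ω-sum lemma : a set with a monotone cofinal sequence of hereditarily-VD pieces is VD. -/
lemma VDT_of_cofinal (T : Set L) (u : ℕ → L) (hu : Monotone u)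
    (hcof : ∀ t ∈ T, ∃ n, t ≤ u n)
    (hp : ∀ n, ∀ T' : Set L, T' ⊆ {z | z ∈ T ∧ z ≤ u n} → VDT ↥T') : VDT ↥T := by
  classical
  have hGood : GoodOrder ℕ := Or.inl ⟨OrderIso.refl ℕ⟩
  apply VDT_of_mono hGood
    (fun t : ↥T => if h : ∃ n, (t : L) ≤ u n then Nat.find h else 0)
  · intro s t hst
    have hs : ∃ n, (s : L) ≤ u n := hcof _ s.2
    have ht : ∃ n, (t : L) ≤ u n := hcof _ t.2
    simp only [dif_pos hs, dif_pos ht]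
    exact Nat.find_mono (hp := hs) (hq := ht) fun n hn => le_trans (show ((s : L) ≤ (t : L)) from hst) hn
  · intro i
    apply VDT_iso (subsubIso T (fun z => (if h : ∃ n, z ≤ u n then Nat.find h else 0) = i)).symm
    apply hp i
    rintro z ⟨hzT, hz⟩
    have hz' : ∃ n, z ≤ u n := hcof _ hzT
    rw [dif_pos hz'] at hz
    exact ⟨hzT, hz ▸ Nat.find_spec hz'⟩

/-- ω*-sum lemma : dual of `VDT_of_cofinal`. -/
lemma VDT_of_coinitial (T : Set L) (u : ℕ → L) (hu : Antitone u)
    (hcof : ∀ t ∈ T, ∃ n, u n ≤ t)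
    (hp : ∀ n, ∀ T' : Set L, T' ⊆ {z | z ∈ T ∧ u n ≤ z} → VDT ↥T') : VDT ↥T := by
  classical
  have hGood : GoodOrder ℕᵒᵈ := Or.inr (Or.inl ⟨OrderIso.refl ℕᵒᵈ⟩)
  apply VDT_of_mono hGood
    (fun t : ↥T => (OrderDual.toDual (if h : ∃ n, u n ≤ (t : L) then Nat.find h else 0) : ℕᵒᵈ))
  · intro s t hst
    have hs : ∃ n, u n ≤ (s : L) := hcof _ s.2
    have ht : ∃ n, u n ≤ (t : L) := hcof _ t.2
    simp only [OrderDual.toDual_le_toDual, dif_pos hs, dif_pos ht]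
    exact Nat.find_mono (hp := ht) (hq := hs) fun n hn => le_trans hn (show ((s : L) ≤ (t : L)) from hst)
  · intro i
    apply VDT_iso (subsubIso T (fun z => (OrderDual.toDual (if h : ∃ n, u n ≤ z then Nat.find h else 0) : ℕᵒᵈ) = i)).symm
    apply hp (OrderDual.ofDual i)
    rintro z ⟨hzT, hz⟩
    have hz' : ∃ n, u n ≤ z := hcof _ hzT
    rw [dif_pos hz'] at hz
    refine ⟨hzT, ?_⟩
    have : Nat.find hz' = OrderDual.ofDual i := by
      simpa using congrArg OrderDual.ofDual hz
    exact this ▸ Nat.find_spec hz'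

/-- `HRel a b` : the closed interval between `a` and `b` is hereditarily VD. -/
def HRel (a b : L) : Prop := HVD (Icc (min a b) (max a b))

omit [Countable L] in
lemma HRel.refl (a : L) : HRel a a := by
  intro T hT
  rw [min_self, max_self, Icc_self] at hT
  have : T.Subsingleton := Set.subsingleton_of_subset_singleton hT
  have := this.coe_sort
  exact VDT_subsingleton _

omit [Countable L] in
lemma HRel.symm {a b : L} (h : HRel a b) : HRel b a := by
  unfold HRel at h ⊢
  rwa [min_comm, max_comm]

omit [Countable L] in
lemma HRel.conv {u v w : L} (h : HRel u v) (hw : w ∈ Icc (min u v) (max u v)) : HRel u w :=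
  HVD.mono h (Icc_subset_Icc (le_min (min_le_left u v) hw.1) (max_le (le_max_left u v) hw.2))

lemma HRel.trans {a b c : L} (hab : HRel a b) (hbc : HRel b c) : HRel a c := by
  intro T hT
  apply VDT_split T (T ∩ Iic b) (T ∩ Ioi b)
  · ext z; by_cases hz : z ≤ b <;> simp [hz, lt_of_not_ge, not_lt_of_ge]
  · rintro x ⟨-, hx⟩ y ⟨-, hy⟩
    exact lt_of_le_of_lt hx hy
  · -- lower part
    rcases le_total (min a b) (min b c) with hm | hm
    · apply hab _
      rintro z ⟨hzT, hzb⟩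
      have hz := hT hzT
      refine ⟨?_, le_trans hzb (le_max_right a b)⟩
      calc min a b ≤ min a c := le_min (min_le_left a b) (le_trans hm (min_le_right b c))
        _ ≤ z := hz.1
    · apply hbc _
      rintro z ⟨hzT, hzb⟩
      have hz := hT hzT
      refine ⟨?_, le_trans hzb (le_max_left b c)⟩
      calc min b c ≤ min a c := le_min (le_trans hm (min_le_left a b)) (min_le_right b c)
        _ ≤ z := hz.1
  · -- upper part
    rcases le_total (max b c) (max a b) with hm | hm
    · apply hab _
      rintro z ⟨hzT, hzb⟩
      have hz := hT hzT
      refine ⟨le_trans (min_le_right a b) (le_of_lt hzb), ?_⟩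
      calc z ≤ max a c := hz.2
        _ ≤ max a b := max_le (le_max_left a b) (le_trans (le_max_right b c) hm)
    · apply hbc _
      rintro z ⟨hzT, hzb⟩
      have hz := hT hzT
      refine ⟨le_trans (min_le_left b c) (le_of_lt hzb), ?_⟩
      calc z ≤ max a c := hz.2
        _ ≤ max b c := max_le (le_trans (le_max_left a b) hm) (le_max_right b c)

lemma HRel.compat {x x' y y' : L} (hx : HRel x x') (hy : HRel y y')
    (hlt : x < y) (hn : ¬ HRel x y) : x' < y' ∧ ¬ HRel x' y' := by
  constructor
  · by_contra hy'x'
    push_neg at hy'x'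
    rcases le_or_gt y x' with hcase | hcase
    · -- y ∈ [x, x']
      exact hn (hx.conv ⟨le_trans (min_le_left x x') (le_of_lt hlt), le_trans hcase (le_max_right x x')⟩)
    · -- x' ∈ [y', y]
      have h1 : HRel y x' := hy.conv ⟨le_trans (min_le_right y y') hy'x', le_trans (le_of_lt hcase) (le_max_left y y')⟩
      exact hn (hx.trans h1.symm)
  · intro h
    exact hn ((hx.trans h).trans hy.symm)

lemma hrel_of_no_between {x y : L} (hxy : x < y)
    (hmid : ∀ z, x < z → z < y → HRel x z ∨ HRel z y) : HRel x y := by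
  have hminmax : Icc (min x y) (max x y) = Icc x y := by
    rw [min_eq_left hxy.le, max_eq_right hxy.le]
  unfold HRel
  rw [hminmax]
  intro T hT
  classical
  set A : Set L := {z | z ∈ Icc x y ∧ HRel x z} with hA
  set B : Set L := {z | z ∈ Icc x y ∧ ¬ HRel x z} with hB
  have hBy : ∀ z ∈ B, HRel z y := by
    rintro z ⟨hz, hnz⟩
    rcases eq_or_lt_of_le hz.2 with rfl | hzy
    · exact HRel.refl _
    · have hxz : x < z := lt_of_le_of_ne hz.1 (fun h => hnz (h ▸ HRel.refl x))
      rcases hmid z hxz hzy with h | h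
      · exact absurd h hnz
      · exact h
  have hAB : ∀ p ∈ A, ∀ q ∈ B, p < q := by
    rintro p ⟨hp, hrp⟩ q ⟨hq, hrq⟩
    by_contra hle
    push_neg at hle
    refine hrq (hrp.conv ⟨le_trans (min_le_left x p) hq.1, le_trans hle (le_max_right x p)⟩)
  apply VDT_split T (T ∩ A) (T ∩ B)
  · ext z
    constructor
    · intro hz
      by_cases h : HRel x z
      · exact Or.inl ⟨hz, hT hz, h⟩
      · exact Or.inr ⟨hz, hT hz, h⟩
    · rintro (⟨h, -⟩ | ⟨h, -⟩) <;> exact h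
  · rintro p ⟨-, hp⟩ q ⟨-, hq⟩
    exact hAB p hp q hq
  · -- lower part : ω-sum of intervals [x, u n]
    rcases Set.eq_empty_or_nonempty (T ∩ A) with hempty | hne
    · rw [hempty]
      exact VDT_subsingleton _
    · obtain ⟨g, hgr⟩ := (Set.to_countable (T ∩ A)).exists_eq_range hne
      set u : ℕ → L := fun n => Nat.rec x (fun n un => max un (g n)) n with hudef
      have hu : Monotone u := monotone_nat_of_le_succ fun n => le_max_left _ _
      have hgA : ∀ n, g n ∈ A := fun n => (hgr ▸ Set.mem_range_self n : g n ∈ T ∩ A).2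
      have huA : ∀ n, u n ∈ A := by
        intro n
        induction n with
        | zero => exact ⟨⟨le_refl x, hxy.le⟩, HRel.refl x⟩
        | succ n ih =>
          show max (u n) (g n) ∈ A
          rcases max_cases (u n) (g n) with ⟨h, -⟩ | ⟨h, -⟩ <;> rw [h]
          · exact ih
          · exact hgA n
      apply VDT_of_cofinal _ u hu
      · intro t ht
        have : t ∈ Set.range g := hgr ▸ ht
        obtain ⟨n, rfl⟩ := this
        exact ⟨n + 1, le_max_right _ _⟩
      · intro n T' hT'
        have hrel : HRel x (u n) := (huA n).2
        have hxu : x ≤ u n := (huA n).1.1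
        apply hrel T'
        intro z hz
        obtain ⟨⟨hzT, hzA⟩, hzu⟩ := hT' hz
        constructor
        · rw [min_eq_left hxu]; exact hzA.1.1
        · rw [max_eq_right hxu]; exact hzu
  · -- upper part : ω*-sum of intervals [v n, y]
    rcases Set.eq_empty_or_nonempty (T ∩ B) with hempty | hne
    · rw [hempty]
      exact VDT_subsingleton _
    · obtain ⟨g, hgr⟩ := (Set.to_countable (T ∩ B)).exists_eq_range hne
      obtain ⟨b0, hb0⟩ := hne
      set v : ℕ → L := fun n => Nat.rec b0 (fun n vn => min vn (g n)) n with hvdef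
      have hv : Antitone v := antitone_nat_of_succ_le fun n => min_le_left _ _
      have hgB : ∀ n, g n ∈ B := fun n => (hgr ▸ Set.mem_range_self n : g n ∈ T ∩ B).2
      have hvB : ∀ n, v n ∈ B := by
        intro n
        induction n with
        | zero => exact hb0.2
        | succ n ih =>
          show min (v n) (g n) ∈ B
          rcases min_cases (v n) (g n) with ⟨h, -⟩ | ⟨h, -⟩ <;> rw [h]
          · exact ih
          · exact hgB n
      apply VDT_of_coinitial _ v hv
      · intro t ht
        have : t ∈ Set.range g := hgr ▸ ht
        obtain ⟨n, rfl⟩ := this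
        exact ⟨n + 1, min_le_right _ _⟩
      · intro n T' hT'
        have hrel : HRel (v n) y := hBy _ (hvB n)
        have hvy : v n ≤ y := (hvB n).1.2
        apply hrel T'
        intro z hz
        obtain ⟨⟨hzT, hzB⟩, hzv⟩ := hT' hz
        constructor
        · rw [min_eq_left hvy]; exact hzv
        · rw [max_eq_right hvy]; exact hzB.1.2

lemma exists_strictMono_of_pair (a b : L) (hnab : ¬ HRel a b) : ∃ g : ℚ → L, StrictMono g := by
  classical
  letI s : Setoid L := ⟨HRel, ⟨HRel.refl, HRel.symm, HRel.trans⟩⟩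
  have wd : ∀ (x y x' y' : L), x ≈ x' → y ≈ y' →
      (x < y ∧ ¬HRel x y) = (x' < y' ∧ ¬HRel x' y') := by
    intro x y x' y' hx hy
    have hx' : HRel x x' := hx
    have hy' : HRel y y' := hy
    apply propext
    constructor
    · rintro ⟨h1, h2⟩
      exact HRel.compat hx' hy' h1 h2
    · rintro ⟨h1, h2⟩
      exact HRel.compat hx'.symm hy'.symm h1 h2
  let ltq : Quotient s → Quotient s → Prop :=
    Quotient.lift₂ (fun x y => x < y ∧ ¬ HRel x y) wd
  have ltq_irrefl : ∀ c, ¬ ltq c c := fun c =>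
    Quotient.inductionOn c (fun x h => lt_irrefl x h.1)
  have ltq_asymm : ∀ c d, ltq c d → ltq d c → False := fun c d =>
    Quotient.inductionOn₂ c d (fun x y h h' => lt_asymm h.1 h'.1)
  letI linQ : LinearOrder (Quotient s) :=
    { lt := ltq
      le := fun c d => c = d ∨ ltq c d
      le_refl := fun c => Or.inl rfl
      le_trans := by
        rintro c d e (rfl | hcd) hde
        · exact hde
        · rcases hde with rfl | hde
          · exact Or.inr hcd
          · refine Or.inr ?_
            revert hcd hde
            refine Quotient.inductionOn₃ c d e ?_
            intro x y z hxy hyz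
            refine (⟨lt_trans hxy.1 hyz.1, fun h => hxy.2 (h.conv ⟨?_, ?_⟩)⟩ :
              x < z ∧ ¬ HRel x z)
            · exact le_trans (min_le_left x z) hxy.1.le
            · exact le_trans hyz.1.le (le_max_right x z)
      lt_iff_le_not_ge := by
        intro c d
        constructor
        · intro h
          refine ⟨Or.inr h, ?_⟩
          rintro (rfl | h')
          · exact ltq_irrefl _ h
          · exact ltq_asymm _ _ h h'
        · rintro ⟨rfl | h, hnot⟩
          · exact absurd (Or.inl rfl) hnot
          · exact h
      le_antisymm := by
        rintro c d (rfl | hcd) (h | hdc)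
        · rfl
        · rfl
        · exact h.symm
        · exact absurd (ltq_asymm _ _ hcd hdc) not_false
      le_total := by
        intro c d
        refine Quotient.inductionOn₂ c d ?_
        intro x y
        rcases lt_trichotomy x y with h | rfl | h
        · by_cases hr : HRel x y
          · exact Or.inl (Or.inl (Quotient.sound hr))
          · exact Or.inl (Or.inr ⟨h, hr⟩)
        · exact Or.inl (Or.inl rfl)
        · by_cases hr : HRel y x
          · exact Or.inl (Or.inl (Quotient.sound hr.symm))
          · exact Or.inr (Or.inr ⟨h, hr⟩)
      toDecidableLE := fun _ _ => Classical.dec _ }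
  haveI : Countable (Quotient s) := Quotient.countable
  haveI : Nontrivial (Quotient s) := ⟨⟦a⟧, ⟦b⟧, fun h => hnab (Quotient.exact h)⟩
  haveI : @DenselyOrdered (Quotient s) linQ.toLT := by
    refine @DenselyOrdered.mk (Quotient s) linQ.toLT ?_
    intro c d hcd
    by_contra hno
    push_neg at hno
    revert hcd hno
    refine Quotient.inductionOn₂ c d ?_
    intro x y hcd hno
    have hxy : x < y ∧ ¬ HRel x y := hcd
    apply hxy.2
    apply hrel_of_no_between hxy.1
    intro z hxz hzy
    by_contra hzz
    push_neg at hzz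
    have h1 : ltq ⟦x⟧ ⟦z⟧ := show x < z ∧ ¬ HRel x z from ⟨hxz, hzz.1⟩
    have h2 : ltq ⟦z⟧ ⟦y⟧ := show z < y ∧ ¬ HRel z y from ⟨hzy, hzz.2⟩
    have h3 := hno ⟦z⟧ h1
    rcases (show (⟦y⟧ : Quotient s) = ⟦z⟧ ∨ ltq ⟦y⟧ ⟦z⟧ from h3) with h3 | h3
    · exact hzz.2 (HRel.symm (Quotient.exact h3))
    · exact ltq_asymm _ _ h2 h3
  obtain ⟨f⟩ := Order.embedding_from_countable_to_dense ℚ (Quotient s)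
  refine ⟨fun q => (f q).out, ?_⟩
  intro q q' hqq'
  have h1 : ltq (f q) (f q') := @OrderEmbedding.strictMono ℚ (Quotient s) _ linQ.toPreorder f _ _ hqq'
  have h2 : ltq ⟦(f q).out⟧ ⟦(f q').out⟧ := by rwa [Quotient.out_eq, Quotient.out_eq]
  exact h2.1

lemma VDT_of_all_rel (hall : ∀ x y : L, HRel x y) : VDT L := by
  rcases isEmpty_or_nonempty L with hL | hL
  · exact VDT_subsingleton L
  classical
  obtain ⟨g, hg⟩ := exists_surjective_nat L
  obtain ⟨x0⟩ := hL
  set u : ℕ → L := fun n => Nat.rec x0 (fun n un => max un (g n)) n with hudef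
  set v : ℕ → L := fun n => Nat.rec x0 (fun n vn => min vn (g n)) n with hvdef
  have hu : Monotone u := monotone_nat_of_le_succ fun n => le_max_left _ _
  have hv : Antitone v := antitone_nat_of_succ_le fun n => min_le_left _ _
  have hucof : ∀ z : L, ∃ n, z ≤ u n := by
    intro z
    obtain ⟨n, rfl⟩ := hg z
    exact ⟨n + 1, le_max_right _ _⟩
  have hvcof : ∀ z : L, ∃ n, v n ≤ z := by
    intro z
    obtain ⟨n, rfl⟩ := hg z
    exact ⟨n + 1, min_le_right _ _⟩
  have hx0u : ∀ n, x0 ≤ u n := fun n => hu (Nat.zero_le n)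
  have hx0v : ∀ n, v n ≤ x0 := fun n => hv (Nat.zero_le n)
  set F : L → ℤ := fun z =>
    if x0 ≤ z then (Nat.find (hucof z) : ℤ) else -(Nat.find (hvcof z) : ℤ) with hFdef
  have hGoodZ : GoodOrder ℤ := Or.inr (Or.inr (Or.inl ⟨OrderIso.refl ℤ⟩))
  have hIccVDT : ∀ (p q : L) (T : Set L), T ⊆ Icc p q → VDT ↥T := by
    intro p q T hT
    rcases le_total p q with hpq | hpq
    · have h := hall p q
      unfold HRel at h
      rw [min_eq_left hpq, max_eq_right hpq] at h
      exact h T hT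
    · have hsub : T ⊆ {p} := by
        intro z hz
        obtain ⟨h1, h2⟩ := hT hz
        exact Set.mem_singleton_iff.2 (le_antisymm (h2.trans hpq) h1)
      have h1 : T.Subsingleton := Set.subsingleton_of_subset_singleton hsub
      have h2 := h1.coe_sort
      exact VDT_subsingleton _
  apply VDT_of_mono hGoodZ F
  · -- monotonicity
    intro z w hzw
    by_cases hz : x0 ≤ z
    · have hw : x0 ≤ w := le_trans hz hzw
      simp only [hFdef, if_pos hz, if_pos hw]
      have : Nat.find (hucof z) ≤ Nat.find (hucof w) :=
        Nat.find_mono fun n hn => le_trans hzw hn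
      exact_mod_cast this
    · by_cases hw : x0 ≤ w
      · simp only [hFdef, if_neg hz, if_pos hw]
        have h1 : (0:ℤ) ≤ (Nat.find (hucof w) : ℤ) := Int.natCast_nonneg _
        have h2 : (0:ℤ) ≤ (Nat.find (hvcof z) : ℤ) := Int.natCast_nonneg _
        linarith
      · simp only [hFdef, if_neg hz, if_neg hw]
        have : Nat.find (hvcof w) ≤ Nat.find (hvcof z) :=
          Nat.find_mono fun n hn => le_trans hn hzw
        have := Int.ofNat_le.2 this
        omega
  · -- fibers
    intro i
    rcases le_or_gt 0 i with hi | hi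
    · refine hIccVDT x0 (u i.toNat) {z | F z = i} ?_
      intro z hz
      have hz' : F z = i := hz
      have hx0z : x0 ≤ z := by
        by_contra hc
        rw [hFdef] at hz'
        simp only [if_neg hc] at hz'
        have h0 : Nat.find (hvcof z) ≠ 0 := by
          intro h0
          exact hc (by have := Nat.find_spec (hvcof z); rw [h0] at this; exact this)
        omega
      constructor
      · exact hx0z
      · rw [hFdef] at hz'
        simp only [if_pos hx0z] at hz'
        have : Nat.find (hucof z) = i.toNat := by omega
        exact this ▸ Nat.find_spec (hucof z)
    · refine hIccVDT (v (-i).toNat) x0 {z | F z = i} ?_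
      intro z hz
      have hz' : F z = i := hz
      have hx0z : ¬ x0 ≤ z := by
        intro hc
        rw [hFdef] at hz'
        simp only [if_pos hc] at hz'
        omega
      constructor
      · rw [hFdef] at hz'
        simp only [if_neg hx0z] at hz'
        have : Nat.find (hvcof z) = (-i).toNat := by omega
        exact this ▸ Nat.find_spec (hvcof z)
      · exact le_of_not_ge hx0z

end scattered

/-- Hausdorff: every countable scattered linear order belongs to the class VD of
(countable) very discrete linear orders. -/
theorem stmt7 (L : Type) [LinearOrder L] [Countable L]
    (hscat : ¬ ∃ g : ℚ → L, StrictMono g) :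
    ∃ (α : Ordinal.{0}) (S : Set ℚ), Nonempty (L ≃o S) ∧ VD α S := by
  have hall : ∀ x y : L, HRel x y := by
    by_contra h
    push_neg at h
    obtain ⟨x, y, hxy⟩ := h
    exact hscat (exists_strictMono_of_pair x y hxy)
  exact VDT_of_all_rel hall
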